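/- Let ρ_t(x) := (2πt)^{−1/2} exp(−x²/(2t)) and ρ_t(x,y) := ρ_t(y − x). For every k ≥ 1, all times 0 ≤ t₀ < t₁ < ⋯ < t_k < t_{k+1} and all x, y ∈ ℝ: ∫_{ℝ^k} ρ_{t₁−t₀}(x,x₁)² · Π_{i=1}^{k−1} ρ_{t_{i+1}−t_i}(x_i,x_{i+1})² · ρ_{t_{k+1}−t_k}(x_k,y)² dx₁⋯dx_k = (1/(2^{k+1} π^{(k+1)/2})) · ρ_{(t_{k+1}−t₀)/2}(x,y) · Π_{i=0}^{k} (t_{i+1} − t_i)^{−1/2}. -/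

import Mathlib

noncomputable section

open MeasureTheory Real

/-- The one-dimensional heat kernel `ρ_t(x) = (2πt)^{-1/2} exp(−x²/(2t))`. -/
def heatK (t x : ℝ) : ℝ :=
  (Real.sqrt (2 * Real.pi * t))⁻¹ * Real.exp (-x ^ 2 / (2 * t))

/-- Extend a `k`-tuple `X` to a `(k+2)`-tuple with prescribed first value `a`
and last value `b`. -/
def extV {α : Type*} (k : ℕ) (a b : α) (X : Fin k → α) (j : Fin (k + 2)) : α :=
  if _h : (j : ℕ) = 0 then a
  else if _h2 : (j : ℕ) = k + 1 then b
  else X ⟨(j : ℕ) - 1, by have := j.isLt; omega⟩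

lemma heatK_nonneg (t x : ℝ) : 0 ≤ heatK t x :=
  mul_nonneg (inv_nonneg.2 (Real.sqrt_nonneg _)) (Real.exp_pos _).le

lemma heatK_continuous (t : ℝ) : Continuous (heatK t) := by
  unfold heatK
  fun_prop

/-- exponent completing-the-square identity -/

lemma exponent_id (s t x y z : ℝ) (hs : 0 < s) (ht : 0 < t) :
    -(z - x) ^ 2 / (2 * s) + -(y - z) ^ 2 / (2 * t)
      = -((s + t) / (2 * s * t)) * (z - (t * x + s * y) / (s + t)) ^ 2
        + -(y - x) ^ 2 / (2 * (s + t)) := by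
  have h1 : s ≠ 0 := hs.ne'
  have h2 : t ≠ 0 := ht.ne'
  have h3 : s + t ≠ 0 := by positivity
  field_simp
  ring

/-- constant identity -/

lemma const_id (s t : ℝ) (hs : 0 < s) (ht : 0 < t) :
    (Real.sqrt (2 * Real.pi * s))⁻¹ * (Real.sqrt (2 * Real.pi * t))⁻¹
      * Real.sqrt (Real.pi / ((s + t) / (2 * s * t)))
      = (Real.sqrt (2 * Real.pi * (s + t)))⁻¹ := by
  have hpi := Real.pi_pos
  rw [← Real.sqrt_inv, ← Real.sqrt_inv, ← Real.sqrt_inv, ← Real.sqrt_mul (by positivity),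
    ← Real.sqrt_mul (by positivity)]
  congr 1
  field_simp

lemma heatK_mul_eq (s t x y : ℝ) (hs : 0 < s) (ht : 0 < t) (z : ℝ) :
    heatK s (z - x) * heatK t (y - z)
      = ((Real.sqrt (2 * Real.pi * s))⁻¹ * (Real.sqrt (2 * Real.pi * t))⁻¹
          * Real.exp (-(y - x) ^ 2 / (2 * (s + t))))
        * Real.exp (-((s + t) / (2 * s * t)) * (z - (t * x + s * y) / (s + t)) ^ 2) := by
  unfold heatK
  rw [mul_mul_mul_comm, ← Real.exp_add, exponent_id s t x y z hs ht, Real.exp_add]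
  ring

lemma conv_integrable (s t x y : ℝ) (hs : 0 < s) (ht : 0 < t) :
    Integrable (fun z => heatK s (z - x) * heatK t (y - z)) := by
  have hb : 0 < (s + t) / (2 * s * t) := by positivity
  have : Integrable (fun z : ℝ =>
      Real.exp (-((s + t) / (2 * s * t)) * (z - (t * x + s * y) / (s + t)) ^ 2)) :=
    (integrable_exp_neg_mul_sq hb).comp_sub_right _
  exact (this.const_mul _).congr (by
    filter_upwards with z using (heatK_mul_eq s t x y hs ht z).symm)

lemma conv_eval (s t x y : ℝ) (hs : 0 < s) (ht : 0 < t) :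
    ∫ z : ℝ, heatK s (z - x) * heatK t (y - z) = heatK (s + t) (y - x) := by
  have hb : 0 < (s + t) / (2 * s * t) := by positivity
  calc ∫ z : ℝ, heatK s (z - x) * heatK t (y - z)
      = ∫ z : ℝ, ((Real.sqrt (2 * Real.pi * s))⁻¹ * (Real.sqrt (2 * Real.pi * t))⁻¹
          * Real.exp (-(y - x) ^ 2 / (2 * (s + t))))
        * Real.exp (-((s + t) / (2 * s * t)) * (z - (t * x + s * y) / (s + t)) ^ 2) := by
        congr 1; ext z; exact heatK_mul_eq s t x y hs ht z
    _ = ((Real.sqrt (2 * Real.pi * s))⁻¹ * (Real.sqrt (2 * Real.pi * t))⁻¹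
          * Real.exp (-(y - x) ^ 2 / (2 * (s + t))))
        * ∫ z : ℝ, Real.exp (-((s + t) / (2 * s * t)) * (z - (t * x + s * y) / (s + t)) ^ 2) :=
        MeasureTheory.integral_const_mul _ _
    _ = heatK (s + t) (y - x) := by
        rw [integral_sub_right_eq_self
          (fun u => Real.exp (-((s + t) / (2 * s * t)) * u ^ 2)) _, integral_gaussian]
        unfold heatK
        rw [← const_id s t hs ht]
        ring

lemma extV_zero {α : Type*} (k : ℕ) (a b : α) (X : Fin k → α) :
    extV k a b X 0 = a := by simp [extV]

lemma extV_succ {α : Type*} (k : ℕ) (a b x₀ : α) (X : Fin k → α) (i : Fin (k + 2)) :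
    extV (k + 1) a b (Fin.cons x₀ X) i.succ = extV k x₀ b X i := by
  rcases i with ⟨m, hm⟩
  unfold extV
  simp only [Fin.succ_mk, Fin.val_mk]
  rcases Nat.eq_zero_or_pos m with h | h
  · subst h
    simp
  · have h1 : ¬ (m = 0) := by omega
    have h2 : ¬ (m + 1 = 0) := by omega
    rw [dif_neg h2, dif_neg h1]
    by_cases h3 : m = k + 1
    · rw [dif_pos (by omega), dif_pos h3]
    · rw [dif_neg (by omega), dif_neg h3]
      have : (⟨m + 1 - 1, by omega⟩ : Fin (k + 1)) = Fin.succ ⟨m - 1, by omega⟩ := by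
        ext; simp; omega
      rw [this, Fin.cons_succ]

lemma measurable_extV (k : ℕ) (a b : ℝ) (j : Fin (k + 2)) :
    Measurable (fun X : Fin k → ℝ => extV k a b X j) := by
  by_cases h1 : (j : ℕ) = 0
  · simp only [extV, dif_pos h1]; exact measurable_const
  · by_cases h2 : (j : ℕ) = k + 1
    · simp only [extV, dif_neg h1, dif_pos h2]; exact measurable_const
    · simp only [extV, dif_neg h1, dif_neg h2]; exact measurable_pi_apply _

lemma measurable_prod_heatK (k : ℕ) (s : Fin (k + 1) → ℝ) (x y : ℝ) :
    Measurable (fun X : Fin k → ℝ => ∏ j : Fin (k + 1),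
      heatK (s j) (extV k x y X j.succ - extV k x y X j.castSucc)) := by
  apply Finset.measurable_prod
  intro j _
  exact (heatK_continuous (s j)).measurable.comp
    ((measurable_extV k x y j.succ).sub (measurable_extV k x y j.castSucc))

lemma conv_lintegral (s t x y : ℝ) (hs : 0 < s) (ht : 0 < t) :
    ∫⁻ z : ℝ, ENNReal.ofReal (heatK s (z - x)) * ENNReal.ofReal (heatK t (y - z))
      = ENNReal.ofReal (heatK (s + t) (y - x)) := by
  simp_rw [← ENNReal.ofReal_mul (heatK_nonneg _ _)]
  rw [← MeasureTheory.ofReal_integral_eq_lintegral_ofReal (conv_integrable s t x y hs ht)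
      (Filter.Eventually.of_forall fun z => mul_nonneg (heatK_nonneg _ _) (heatK_nonneg _ _)),
    conv_eval s t x y hs ht]

lemma CK (k : ℕ) : ∀ (s : Fin (k + 1) → ℝ), (∀ j, 0 < s j) → ∀ x y : ℝ,
    (∫⁻ X : Fin k → ℝ, ENNReal.ofReal (∏ j : Fin (k + 1),
        heatK (s j) (extV k x y X j.succ - extV k x y X j.castSucc)))
      = ENNReal.ofReal (heatK (∑ j, s j) (y - x)) := by
  induction k with
  | zero =>
    intro s hs x y
    have hconst : ∀ X : Fin 0 → ℝ, (∏ j : Fin 1,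
        heatK (s j) (extV 0 x y X j.succ - extV 0 x y X j.castSucc))
        = heatK (s 0) (y - x) := by
      intro X
      rw [Fin.prod_univ_one]
      congr 1
    simp only [hconst]
    rw [lintegral_const]
    have h1 : (volume : Measure (Fin 0 → ℝ)) Set.univ = 1 := by
      rw [MeasureTheory.volume_pi, MeasureTheory.Measure.pi_univ]
      simp
    have h2 : (∑ j : Fin (0 + 1), s j) = s 0 := by simp
    rw [h1, mul_one, h2]
  | succ k ih =>
    intro s hs x y
    have hmeas : Measurable fun X : Fin (k + 1) → ℝ => ENNReal.ofReal
        (∏ j : Fin (k + 2), heatK (s j)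
          (extV (k + 1) x y X j.succ - extV (k + 1) x y X j.castSucc)) :=
      (measurable_prod_heatK _ s x y).ennreal_ofReal
    have hmp := (MeasureTheory.measurePreserving_piFinSuccAbove
      (fun _ : Fin (k + 1) => (volume : Measure ℝ)) 0).symm
    have haem : AEMeasurable (fun a : ℝ × (Fin k → ℝ) => ENNReal.ofReal
        (∏ j : Fin (k + 2), heatK (s j)
          (extV (k + 1) x y
            ((MeasurableEquiv.piFinSuccAbove (fun _ : Fin (k + 1) => ℝ) 0).symm a) j.succ -
           extV (k + 1) x y
            ((MeasurableEquiv.piFinSuccAbove (fun _ : Fin (k + 1) => ℝ) 0).symm a) j.castSucc)))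
        ((volume : Measure ℝ).prod (Measure.pi fun _ : Fin k => (volume : Measure ℝ))) :=
      (hmeas.comp (MeasurableEquiv.measurable _)).aemeasurable
    rw [MeasureTheory.volume_pi, ← hmp.lintegral_comp hmeas,
      MeasureTheory.lintegral_prod _ haem]
    have hsymm : ∀ (a : ℝ) (b : Fin k → ℝ),
        (MeasurableEquiv.piFinSuccAbove (fun _ : Fin (k + 1) => ℝ) 0).symm (a, b)
          = Fin.cons a b := by
      intro a b
      simp [MeasurableEquiv.piFinSuccAbove_symm_apply, Fin.insertNth_zero', Fin.consEquiv]
    simp only [hsymm]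
    have key : ∀ x₀ : ℝ,
        (∫⁻ X' : Fin k → ℝ, ENNReal.ofReal (∏ j : Fin (k + 2), heatK (s j)
          (extV (k + 1) x y (Fin.cons x₀ X') j.succ
            - extV (k + 1) x y (Fin.cons x₀ X') j.castSucc))
          ∂(Measure.pi fun _ : Fin k => (volume : Measure ℝ)))
        = ENNReal.ofReal (heatK (s 0) (x₀ - x))
          * ENNReal.ofReal (heatK (∑ j : Fin (k + 1), s j.succ) (y - x₀)) := by
      intro x₀
      rw [← MeasureTheory.volume_pi]
      have hprod : ∀ X' : Fin k → ℝ,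
          (∏ j : Fin (k + 2), heatK (s j)
            (extV (k + 1) x y (Fin.cons x₀ X') j.succ
              - extV (k + 1) x y (Fin.cons x₀ X') j.castSucc))
          = heatK (s 0) (x₀ - x) * ∏ j : Fin (k + 1), heatK (s j.succ)
              (extV k x₀ y X' j.succ - extV k x₀ y X' j.castSucc) := by
        intro X'
        rw [Fin.prod_univ_succ]
        refine congrArg₂ (· * ·) ?_ ?_
        · have h1 : extV (k + 1) x y (Fin.cons x₀ X') ((0 : Fin (k + 2)).succ) = x₀ := by
            rw [extV_succ (k := k) x y x₀ X' 0, extV_zero]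
          rw [h1, Fin.castSucc_zero, extV_zero]
        · refine Finset.prod_congr rfl fun j _ => ?_
          rw [← Fin.succ_castSucc, extV_succ, extV_succ]
      simp only [hprod]
      rw [lintegral_congr (fun X' => ENNReal.ofReal_mul (heatK_nonneg _ _)),
        lintegral_const_mul _ ((measurable_prod_heatK k (fun j => s j.succ) x₀ y).ennreal_ofReal)]
      rw [ih (fun j => s j.succ) (fun j => hs j.succ) x₀ y]
    simp only [key]
    rw [conv_lintegral _ _ _ _ (hs 0) (by
      apply Finset.sum_pos (fun j _ => hs j.succ)
      exact Finset.univ_nonempty), ← Fin.sum_univ_succ]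

lemma telescope (k : ℕ) (τ : Fin (k + 2) → ℝ) :
    (∑ j : Fin (k + 1), (τ j.succ - τ j.castSucc)) = τ (Fin.last (k + 1)) - τ 0 := by
  set g : ℕ → ℝ := fun i => τ ⟨i % (k + 2), Nat.mod_lt _ (by omega)⟩ with hg
  have hgval : ∀ (m : ℕ) (h : m < k + 2), g m = τ ⟨m, h⟩ := by
    intro m h
    simp only [hg]
    congr 1
    ext
    exact Nat.mod_eq_of_lt h
  have hstep : ∀ j : Fin (k + 1), τ j.succ - τ j.castSucc = g (j + 1) - g j := by
    intro j
    have hj := j.isLt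
    rw [hgval (j + 1) (by omega), hgval j (by omega)]
    congr 1
  rw [Finset.sum_congr rfl (fun j _ => hstep j),
    Fin.sum_univ_eq_sum_range (fun i => g (i + 1) - g i) (k + 1),
    Finset.sum_range_sub, hgval (k + 1) (by omega), hgval 0 (by omega)]
  rfl

lemma heatK_sq (t z : ℝ) (ht : 0 < t) :
    heatK t z ^ 2 = (2 * Real.sqrt (Real.pi * t))⁻¹ * heatK (t / 2) z := by
  have hpi := Real.pi_pos
  unfold heatK
  rw [mul_pow, ← Real.exp_nat_mul]
  have h1 : ((Real.sqrt (2 * Real.pi * t))⁻¹) ^ 2 = (2 * Real.pi * t)⁻¹ := by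
    rw [inv_pow, Real.sq_sqrt (by positivity)]
  have h2 : (2 : ℕ) * (-z ^ 2 / (2 * t)) = -z ^ 2 / (2 * (t / 2)) := by
    push_cast; field_simp
  rw [h1, h2]
  have h3 : (2 * Real.pi * t)⁻¹
      = (2 * Real.sqrt (Real.pi * t))⁻¹ * (Real.sqrt (2 * Real.pi * (t / 2)))⁻¹ := by
    have key : Real.sqrt (Real.pi * t) * Real.sqrt (Real.pi * t) = Real.pi * t :=
      Real.mul_self_sqrt (by positivity)
    rw [show 2 * Real.pi * (t / 2) = Real.pi * t by ring, ← mul_inv]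
    congr 1
    nlinarith [key]
  rw [h3]
  ring

lemma const_prod (k : ℕ) (Δ : Fin (k + 1) → ℝ) (hΔ : ∀ j, 0 < Δ j) :
    (∏ j : Fin (k + 1), (2 * Real.sqrt (Real.pi * Δ j))⁻¹)
      = ((2 : ℝ) ^ (k + 1) * Real.pi ^ (((k : ℝ) + 1) / 2))⁻¹
        * ∏ j : Fin (k + 1), (Real.sqrt (Δ j))⁻¹ := by
  have hpi := Real.pi_pos
  have h1 : ∀ j : Fin (k + 1), (2 * Real.sqrt (Real.pi * Δ j))⁻¹
      = (2 * Real.sqrt Real.pi)⁻¹ * (Real.sqrt (Δ j))⁻¹ := by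
    intro j
    rw [Real.sqrt_mul hpi.le, ← mul_inv, mul_assoc]
  rw [Finset.prod_congr rfl (fun j _ => h1 j), Finset.prod_mul_distrib,
    Finset.prod_const, Finset.card_univ, Fintype.card_fin]
  congr 1
  rw [inv_pow, mul_pow]
  congr 2
  rw [Real.sqrt_eq_rpow, ← Real.rpow_natCast (Real.pi ^ ((1 : ℝ) / 2)) (k + 1),
    ← Real.rpow_mul hpi.le]
  congr 1
  push_cast
  ring

/-- exact evaluation of the Gaussian integral of products of squared heat
kernels over the interior space variables. -/
theorem squared_heat_kernel_space_integral
    (k : ℕ) (hk : 1 ≤ k) (τ : Fin (k + 2) → ℝ) (hτ : StrictMono τ) (h0 : 0 ≤ τ 0)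
    (x y : ℝ) :
    (∫ X : Fin k → ℝ, ∏ j : Fin (k + 1),
        (heatK (τ j.succ - τ j.castSucc) (extV k x y X j.succ - extV k x y X j.castSucc)) ^ 2)
      = ((2 : ℝ) ^ (k + 1) * Real.pi ^ (((k : ℝ) + 1) / 2))⁻¹ *
          heatK ((τ (Fin.last (k + 1)) - τ 0) / 2) (y - x) *
          ∏ j : Fin (k + 1), (Real.sqrt (τ j.succ - τ j.castSucc))⁻¹ := by
  have hΔ : ∀ j : Fin (k + 1), 0 < τ j.succ - τ j.castSucc :=
    fun j => sub_pos.2 (hτ (Fin.castSucc_lt_succ : j.castSucc < j.succ))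
  have step1 : ∀ X : Fin k → ℝ, (∏ j : Fin (k + 1),
      (heatK (τ j.succ - τ j.castSucc) (extV k x y X j.succ - extV k x y X j.castSucc)) ^ 2)
      = (∏ j : Fin (k + 1), (2 * Real.sqrt (Real.pi * (τ j.succ - τ j.castSucc)))⁻¹)
        * ∏ j : Fin (k + 1), heatK ((τ j.succ - τ j.castSucc) / 2)
            (extV k x y X j.succ - extV k x y X j.castSucc) := by
    intro X
    rw [← Finset.prod_mul_distrib]
    exact Finset.prod_congr rfl fun j _ => heatK_sq _ _ (hΔ j)
  simp only [step1]
  rw [MeasureTheory.integral_const_mul]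
  have step2 : (∫ X : Fin k → ℝ, ∏ j : Fin (k + 1), heatK ((τ j.succ - τ j.castSucc) / 2)
      (extV k x y X j.succ - extV k x y X j.castSucc))
      = heatK ((τ (Fin.last (k + 1)) - τ 0) / 2) (y - x) := by
    rw [MeasureTheory.integral_eq_lintegral_of_nonneg_ae
      (Filter.Eventually.of_forall fun X =>
        Finset.prod_nonneg fun j _ => heatK_nonneg _ _)
      (measurable_prod_heatK k (fun j => (τ j.succ - τ j.castSucc) / 2) x y).aestronglyMeasurable,
      CK k (fun j => (τ j.succ - τ j.castSucc) / 2) (fun j => by have := hΔ j; positivity) x y,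
      ENNReal.toReal_ofReal (heatK_nonneg _ _), ← Finset.sum_div, telescope]
  rw [step2, const_prod k _ hΔ]
  ring

end
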